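/- O(1/k) convergence rate of the exact surrogate (majorize–minimize) iteration: In the surrogate setup, assume τ > ‖W‖₂, let Ω⁽⁰⁾ ∈ 𝒮, and for i ≥ 0 let Ω^{(i+1)} be the (unique) minimizer of g(·, Ω^{(i)}) over 𝒮. Then for every global minimizer Ω° of f over 𝒮 and every integer k ≥ 1: (1/k) Σ_{i=1}^{k} f(Ω^{(i)}) − f(Ω°) ≤ τ² ‖Ω⁽⁰⁾ − Ω°‖_F² / (2k), and consequently f(Ω^{(k)}) − f(Ω°) ≤ τ² ‖Ω⁽⁰⁾ − Ω°‖_F² / (2k). -/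

import Mathlib

open Matrix
open scoped Classical

noncomputable section

/-- Squared Euclidean norm of a vector. -/
def sqnorm {ι : Type*} [Fintype ι] (v : ι → ℝ) : ℝ := ∑ i, v i ^ 2

/-- Spectral norm (ℓ₂ operator norm) of a real matrix:
the supremum of `‖A v‖₂` over vectors `v` with `‖v‖₂ ≤ 1`. -/
def specNorm {ι κ : Type*} [Fintype ι] [Fintype κ] (A : Matrix ι κ ℝ) : ℝ :=
  sSup {c : ℝ | ∃ v : κ → ℝ, sqnorm v ≤ 1 ∧ c = Real.sqrt (sqnorm (A.mulVec v))}

/-- (Columnwise) vectorization of `Ω ∈ ℝ^{(p+1)×p}`, using the product index set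
`Fin (p+1) × Fin p` for `ℝ^{(p+1)p}`. -/
def vecM {p : ℕ} (Ω : Matrix (Fin (p + 1)) (Fin p) ℝ) : Fin (p + 1) × Fin p → ℝ :=
  fun ik => Ω ik.1 ik.2

/-- The convex penalty
`P(Ω) = Σ_j (λ_b)_j |b_j| + Σ_{j,k} (Λ_Φ)_{jk} |Φ_{jk}| + Σ_k (λ_Ω)_k ‖Ω[:,k]‖₂`,
where `Ω = [b, Φᵀ]ᵀ`, i.e. `b_j = Ω 0 j` and `Φ j k = Ω k.succ j`. -/
def Pen {p : ℕ} (lb : Fin p → ℝ) (LPhi : Matrix (Fin p) (Fin p) ℝ) (lO : Fin p → ℝ)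
    (Ω : Matrix (Fin (p + 1)) (Fin p) ℝ) : ℝ :=
  (∑ j, lb j * |Ω 0 j|) + (∑ j, ∑ k, LPhi j k * |Ω k.succ j|)
    + ∑ k, lO k * Real.sqrt (∑ i, Ω i k ^ 2)

/-- The quadratic loss `ℓ(Ω) = (1/2)‖y − W vec(Ω)‖₂²`. -/
def lossL {n p : ℕ} (W : Matrix (Fin n) (Fin (p + 1) × Fin p) ℝ) (y : Fin n → ℝ)
    (Ω : Matrix (Fin (p + 1)) (Fin p) ℝ) : ℝ :=
  (1 / 2) * ∑ i, (y i - W.mulVec (vecM Ω) i) ^ 2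

/-- The objective `f(Ω) = ℓ(Ω) + P(Ω)`. -/
def fObj {n p : ℕ} (W : Matrix (Fin n) (Fin (p + 1) × Fin p) ℝ) (y : Fin n → ℝ)
    (lb : Fin p → ℝ) (LPhi : Matrix (Fin p) (Fin p) ℝ) (lO : Fin p → ℝ)
    (Ω : Matrix (Fin (p + 1)) (Fin p) ℝ) : ℝ :=
  lossL W y Ω + Pen lb LPhi lO Ω

/-- The surrogate
`g(Ω, Ω') = ℓ(Ω') − ⟨Wᵀ(y − W vec Ω'), vec Ω − vec Ω'⟩ + (τ²/2)‖Ω − Ω'‖_F² + P(Ω)`. -/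
def gSur {n p : ℕ} (W : Matrix (Fin n) (Fin (p + 1) × Fin p) ℝ) (y : Fin n → ℝ)
    (lb : Fin p → ℝ) (LPhi : Matrix (Fin p) (Fin p) ℝ) (lO : Fin p → ℝ) (τ : ℝ)
    (Ω Ω' : Matrix (Fin (p + 1)) (Fin p) ℝ) : ℝ :=
  lossL W y Ω'
    - (∑ u : Fin (p + 1) × Fin p,
        Wᵀ.mulVec (fun i => y i - W.mulVec (vecM Ω') i) u * (vecM Ω u - vecM Ω' u))
    + (τ ^ 2 / 2) * (∑ i, ∑ k, (Ω i k - Ω' i k) ^ 2)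
    + Pen lb LPhi lO Ω

/-- The feasible set `𝒮 = {Ω = [b, Φᵀ]ᵀ : Φ = Φᵀ}`. -/
def Sfeas (p : ℕ) : Set (Matrix (Fin (p + 1)) (Fin p) ℝ) :=
  {Ω | ∀ j k : Fin p, Ω j.succ k = Ω k.succ j}


namespace SurAux

lemma sum_sq_nonneg {ι : Type*} [Fintype ι] (v : ι → ℝ) : (0:ℝ) ≤ ∑ i, v i ^ 2 :=
  Finset.sum_nonneg fun i _ => sq_nonneg _

lemma sqrt_sum_sq_add_le {ι : Type*} [Fintype ι] (a b : ι → ℝ) :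
    Real.sqrt (∑ i, (a i + b i) ^ 2)
      ≤ Real.sqrt (∑ i, a i ^ 2) + Real.sqrt (∑ i, b i ^ 2) := by
  have ha := sum_sq_nonneg a; have hb := sum_sq_nonneg b
  have hcs : (∑ i, a i * b i) ≤ Real.sqrt (∑ i, a i ^ 2) * Real.sqrt (∑ i, b i ^ 2) := by
    have h1 := Finset.sum_mul_sq_le_sq_mul_sq Finset.univ a b
    have h2 : Real.sqrt ((∑ i, a i * b i) ^ 2) ≤ Real.sqrt ((∑ i, a i ^ 2) * ∑ i, b i ^ 2) :=
      Real.sqrt_le_sqrt h1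
    rw [Real.sqrt_sq_eq_abs, Real.sqrt_mul ha] at h2
    exact (le_abs_self _).trans h2
  have ea : Real.sqrt (∑ i, a i ^ 2) ^ 2 = ∑ i, a i ^ 2 := Real.sq_sqrt ha
  have eb : Real.sqrt (∑ i, b i ^ 2) ^ 2 = ∑ i, b i ^ 2 := Real.sq_sqrt hb
  have expand : (∑ i, (a i + b i) ^ 2)
      = (∑ i, a i ^ 2) + 2 * (∑ i, a i * b i) + (∑ i, b i ^ 2) := by
    rw [Finset.mul_sum, ← Finset.sum_add_distrib, ← Finset.sum_add_distrib]
    exact Finset.sum_congr rfl fun i _ => by ring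
  have key : (∑ i, (a i + b i) ^ 2)
      ≤ (Real.sqrt (∑ i, a i ^ 2) + Real.sqrt (∑ i, b i ^ 2)) ^ 2 := by nlinarith
  calc Real.sqrt (∑ i, (a i + b i) ^ 2)
      ≤ Real.sqrt ((Real.sqrt (∑ i, a i ^ 2) + Real.sqrt (∑ i, b i ^ 2)) ^ 2) :=
        Real.sqrt_le_sqrt key
    _ = _ := Real.sqrt_sq (by positivity)

lemma sqrt_sum_sq_smul {ι : Type*} [Fintype ι] {c : ℝ} (hc : 0 ≤ c) (a : ι → ℝ) :
    Real.sqrt (∑ i, (c * a i) ^ 2) = c * Real.sqrt (∑ i, a i ^ 2) := by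
  have h : (∑ i, (c * a i) ^ 2) = c ^ 2 * ∑ i, a i ^ 2 := by
    rw [Finset.mul_sum]; exact Finset.sum_congr rfl fun i _ => by ring
  rw [h, Real.sqrt_mul (sq_nonneg c), Real.sqrt_sq hc]

lemma sqrt_sum_sq_combo {ι : Type*} [Fintype ι] {t : ℝ} (h0 : 0 ≤ t) (h1 : t ≤ 1) (a b : ι → ℝ) :
    Real.sqrt (∑ i, ((1 - t) * a i + t * b i) ^ 2)
      ≤ (1 - t) * Real.sqrt (∑ i, a i ^ 2) + t * Real.sqrt (∑ i, b i ^ 2) := by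
  have h := sqrt_sum_sq_add_le (fun i => (1 - t) * a i) (fun i => t * b i)
  rwa [sqrt_sum_sq_smul (by linarith : (0:ℝ) ≤ 1 - t) a, sqrt_sum_sq_smul h0 b] at h

lemma sqnorm_smul {ι : Type*} [Fintype ι] (c : ℝ) (w : ι → ℝ) :
    sqnorm (fun i => c * w i) = c ^ 2 * sqnorm w := by
  unfold sqnorm; rw [Finset.mul_sum]; exact Finset.sum_congr rfl fun i _ => by ring

lemma specNorm_bddAbove {ι κ : Type*} [Fintype ι] [Fintype κ] (A : Matrix ι κ ℝ) :
    BddAbove {c : ℝ | ∃ v : κ → ℝ, sqnorm v ≤ 1 ∧ c = Real.sqrt (sqnorm (A.mulVec v))} := by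
  refine ⟨Real.sqrt (∑ i, ∑ k, A i k ^ 2), ?_⟩
  rintro c ⟨w, hw, rfl⟩
  apply Real.sqrt_le_sqrt
  unfold sqnorm at hw ⊢
  calc ∑ i, (A.mulVec w i) ^ 2
      ≤ ∑ i, (∑ k, A i k ^ 2) * (∑ k, w k ^ 2) := by
        refine Finset.sum_le_sum fun i _ => ?_
        have h := Finset.sum_mul_sq_le_sq_mul_sq Finset.univ (fun k => A i k) w
        simpa [Matrix.mulVec, dotProduct] using h
    _ ≤ ∑ i, (∑ k, A i k ^ 2) * 1 :=
        Finset.sum_le_sum fun i _ => mul_le_mul_of_nonneg_left hw (sum_sq_nonneg _)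
    _ = ∑ i, ∑ k, A i k ^ 2 := by simp

lemma specNorm_nonneg {ι κ : Type*} [Fintype ι] [Fintype κ] (A : Matrix ι κ ℝ) :
    0 ≤ specNorm A := by
  have hmem : Real.sqrt (sqnorm (A.mulVec 0)) ∈
      {c : ℝ | ∃ v : κ → ℝ, sqnorm v ≤ 1 ∧ c = Real.sqrt (sqnorm (A.mulVec v))} :=
    ⟨0, by simp [sqnorm], rfl⟩
  exact le_trans (Real.sqrt_nonneg _) (le_csSup (specNorm_bddAbove A) hmem)

lemma sqnorm_mulVec_le {ι κ : Type*} [Fintype ι] [Fintype κ] (A : Matrix ι κ ℝ) (v : κ → ℝ) :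
    sqnorm (A.mulVec v) ≤ specNorm A ^ 2 * sqnorm v := by
  have unit : ∀ w : κ → ℝ, sqnorm w ≤ 1 → sqnorm (A.mulVec w) ≤ specNorm A ^ 2 := by
    intro w hw
    have h1 : Real.sqrt (sqnorm (A.mulVec w)) ≤ specNorm A :=
      le_csSup (specNorm_bddAbove A) ⟨w, hw, rfl⟩
    have h2 : 0 ≤ sqnorm (A.mulVec w) := sum_sq_nonneg _
    calc sqnorm (A.mulVec w) = Real.sqrt (sqnorm (A.mulVec w)) ^ 2 := (Real.sq_sqrt h2).symm
      _ ≤ specNorm A ^ 2 := by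
          have := Real.sqrt_nonneg (sqnorm (A.mulVec w))
          nlinarith
  rcases eq_or_lt_of_le (sum_sq_nonneg v) with h0 | h0
  · have hv : v = 0 := by
      funext i
      have := (Finset.sum_eq_zero_iff_of_nonneg (fun i _ => sq_nonneg (v i))).1 h0.symm i
        (Finset.mem_univ i)
      exact pow_eq_zero_iff two_ne_zero |>.mp this
    subst hv
    simp [sqnorm]
  · have hspos : 0 < sqnorm v := h0
    have hc2 : ((Real.sqrt (sqnorm v))⁻¹) ^ 2 = (sqnorm v)⁻¹ := by
      rw [← Real.sqrt_inv]
      exact Real.sq_sqrt (inv_nonneg.2 hspos.le)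
    have hmv : ∀ i, A.mulVec (fun k => (Real.sqrt (sqnorm v))⁻¹ * v k) i
        = (Real.sqrt (sqnorm v))⁻¹ * A.mulVec v i := by
      intro i
      simp only [Matrix.mulVec, dotProduct, Finset.mul_sum]
      exact Finset.sum_congr rfl fun k _ => by ring
    have hw1 : sqnorm (fun k => (Real.sqrt (sqnorm v))⁻¹ * v k) = 1 := by
      rw [sqnorm_smul, hc2, inv_mul_cancel₀ (ne_of_gt hspos)]
    have hb := unit _ (le_of_eq hw1)
    have hAw : sqnorm (A.mulVec (fun k => (Real.sqrt (sqnorm v))⁻¹ * v k))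
        = ((Real.sqrt (sqnorm v))⁻¹) ^ 2 * sqnorm (A.mulVec v) := by
      rw [show A.mulVec (fun k => (Real.sqrt (sqnorm v))⁻¹ * v k)
          = fun i => (Real.sqrt (sqnorm v))⁻¹ * A.mulVec v i from funext hmv, sqnorm_smul]
    rw [hAw, hc2] at hb
    have h3 := mul_le_mul_of_nonneg_left hb hspos.le
    rw [← mul_assoc, mul_inv_cancel₀ (ne_of_gt hspos), one_mul] at h3
    linarith [h3]

end SurAux

namespace SurAux

variable {n p : ℕ} (W : Matrix (Fin n) (Fin (p + 1) × Fin p) ℝ) (y : Fin n → ℝ)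
  (lb : Fin p → ℝ) (LPhi : Matrix (Fin p) (Fin p) ℝ) (lO : Fin p → ℝ) (τ : ℝ)

lemma Dsym (A B : Matrix (Fin (p + 1)) (Fin p) ℝ) :
    (∑ i, ∑ k, (A i k - B i k) ^ 2) = ∑ i, ∑ k, (B i k - A i k) ^ 2 :=
  Finset.sum_congr rfl fun i _ => Finset.sum_congr rfl fun k _ => by ring

lemma Dnonneg (A B : Matrix (Fin (p + 1)) (Fin p) ℝ) :
    (0:ℝ) ≤ ∑ i, ∑ k, (A i k - B i k) ^ 2 :=
  Finset.sum_nonneg fun i _ => Finset.sum_nonneg fun k _ => sq_nonneg _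

lemma gSur_eq_fObj (Ω Ω' : Matrix (Fin (p + 1)) (Fin p) ℝ) :
    gSur W y lb LPhi lO τ Ω Ω'
      = fObj W y lb LPhi lO Ω
        + (τ ^ 2 / 2) * (∑ i, ∑ k, (Ω i k - Ω' i k) ^ 2)
        - (1 / 2) * ∑ i, (W.mulVec (fun u => vecM Ω u - vecM Ω' u) i) ^ 2 := by
  have hsplit : ∀ i, y i - W.mulVec (vecM Ω) i
      = (y i - W.mulVec (vecM Ω') i) - W.mulVec (fun u => vecM Ω u - vecM Ω' u) i := by
    intro i
    simp only [Matrix.mulVec, dotProduct, vecM, mul_sub, Finset.sum_sub_distrib]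
    ring
  have hswap : (∑ u : Fin (p + 1) × Fin p,
      Wᵀ.mulVec (fun i => y i - W.mulVec (vecM Ω') i) u * (vecM Ω u - vecM Ω' u))
      = ∑ i, (y i - W.mulVec (vecM Ω') i)
          * W.mulVec (fun u => vecM Ω u - vecM Ω' u) i := by
    simp only [Matrix.mulVec, dotProduct, Matrix.transpose_apply, Finset.sum_mul,
      Finset.mul_sum]
    rw [Finset.sum_comm]
    exact Finset.sum_congr rfl fun i _ => Finset.sum_congr rfl fun u _ => by ring
  have hL : lossL W y Ω
      = lossL W y Ω'
        - (∑ i, (y i - W.mulVec (vecM Ω') i)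
            * W.mulVec (fun u => vecM Ω u - vecM Ω' u) i)
        + (1 / 2) * ∑ i, (W.mulVec (fun u => vecM Ω u - vecM Ω' u) i) ^ 2 := by
    unfold lossL
    rw [show (∑ i, (y i - W.mulVec (vecM Ω) i) ^ 2)
        = ∑ i, ((y i - W.mulVec (vecM Ω') i)
            - W.mulVec (fun u => vecM Ω u - vecM Ω' u) i) ^ 2 from
      Finset.sum_congr rfl fun i _ => by rw [hsplit i]]
    rw [Finset.mul_sum, Finset.mul_sum, Finset.mul_sum, ← Finset.sum_sub_distrib,
      ← Finset.sum_add_distrib]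
    exact Finset.sum_congr rfl fun i _ => by ring
  unfold gSur fObj
  rw [hswap, hL]
  ring

lemma gSur_self (Ω : Matrix (Fin (p + 1)) (Fin p) ℝ) :
    gSur W y lb LPhi lO τ Ω Ω = fObj W y lb LPhi lO Ω := by
  rw [gSur_eq_fObj]
  simp [Matrix.mulVec, dotProduct, sub_self]

lemma fObj_le_gSur (hτ : specNorm W < τ) (Ω Ω' : Matrix (Fin (p + 1)) (Fin p) ℝ) :
    fObj W y lb LPhi lO Ω ≤ gSur W y lb LPhi lO τ Ω Ω' := by
  rw [gSur_eq_fObj]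
  have h2 := sqnorm_mulVec_le W (fun u => vecM Ω u - vecM Ω' u)
  have hs : sqnorm (fun u : Fin (p + 1) × Fin p => vecM Ω u - vecM Ω' u)
      = ∑ i, ∑ k, (Ω i k - Ω' i k) ^ 2 := by
    unfold sqnorm vecM
    rw [Fintype.sum_prod_type]
  have hspec : specNorm W ^ 2 ≤ τ ^ 2 := by
    have h0 := specNorm_nonneg W
    nlinarith
  have h3 : sqnorm (W.mulVec (fun u => vecM Ω u - vecM Ω' u))
      ≤ τ ^ 2 * (∑ i, ∑ k, (Ω i k - Ω' i k) ^ 2) := by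
    calc sqnorm (W.mulVec (fun u => vecM Ω u - vecM Ω' u))
        ≤ specNorm W ^ 2 * sqnorm (fun u : Fin (p + 1) × Fin p => vecM Ω u - vecM Ω' u) := h2
      _ ≤ τ ^ 2 * sqnorm (fun u : Fin (p + 1) × Fin p => vecM Ω u - vecM Ω' u) :=
          mul_le_mul_of_nonneg_right hspec (by rw [hs]; exact Dnonneg _ _)
      _ = τ ^ 2 * (∑ i, ∑ k, (Ω i k - Ω' i k) ^ 2) := by rw [hs]
  have h4 : sqnorm (W.mulVec (fun u => vecM Ω u - vecM Ω' u))
      = ∑ i, (W.mulVec (fun u => vecM Ω u - vecM Ω' u) i) ^ 2 := rfl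
  rw [h4] at h3
  linarith

lemma pen_combo (hlb : ∀ j, 0 ≤ lb j) (hLPhi : ∀ j k, 0 ≤ LPhi j k) (hlO : ∀ k, 0 ≤ lO k)
    {t : ℝ} (ht0 : 0 ≤ t) (ht1 : t ≤ 1) (A B : Matrix (Fin (p + 1)) (Fin p) ℝ) :
    Pen lb LPhi lO (fun i k => (1 - t) * A i k + t * B i k)
      ≤ (1 - t) * Pen lb LPhi lO A + t * Pen lb LPhi lO B := by
  have habs : ∀ x z : ℝ, |(1 - t) * x + t * z| ≤ (1 - t) * |x| + t * |z| := by
    intro x z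
    calc |(1 - t) * x + t * z| ≤ |(1 - t) * x| + |t * z| := abs_add_le _ _
      _ = (1 - t) * |x| + t * |z| := by
          rw [abs_mul, abs_mul, abs_of_nonneg (by linarith : (0:ℝ) ≤ 1 - t),
            abs_of_nonneg ht0]
  unfold Pen
  have h1 : (∑ j, lb j * |(1 - t) * A 0 j + t * B 0 j|)
      ≤ (1 - t) * (∑ j, lb j * |A 0 j|) + t * ∑ j, lb j * |B 0 j| := by
    rw [Finset.mul_sum, Finset.mul_sum, ← Finset.sum_add_distrib]
    refine Finset.sum_le_sum fun j _ => ?_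
    calc lb j * |(1 - t) * A 0 j + t * B 0 j|
        ≤ lb j * ((1 - t) * |A 0 j| + t * |B 0 j|) :=
          mul_le_mul_of_nonneg_left (habs _ _) (hlb j)
      _ = (1 - t) * (lb j * |A 0 j|) + t * (lb j * |B 0 j|) := by ring
  have h2 : (∑ j, ∑ k, LPhi j k * |(1 - t) * A k.succ j + t * B k.succ j|)
      ≤ (1 - t) * (∑ j, ∑ k, LPhi j k * |A k.succ j|)
        + t * ∑ j, ∑ k, LPhi j k * |B k.succ j| := by
    rw [Finset.mul_sum, Finset.mul_sum, ← Finset.sum_add_distrib]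
    refine Finset.sum_le_sum fun j _ => ?_
    rw [Finset.mul_sum, Finset.mul_sum, ← Finset.sum_add_distrib]
    refine Finset.sum_le_sum fun k _ => ?_
    calc LPhi j k * |(1 - t) * A k.succ j + t * B k.succ j|
        ≤ LPhi j k * ((1 - t) * |A k.succ j| + t * |B k.succ j|) :=
          mul_le_mul_of_nonneg_left (habs _ _) (hLPhi j k)
      _ = (1 - t) * (LPhi j k * |A k.succ j|) + t * (LPhi j k * |B k.succ j|) := by ring
  have h3 : (∑ k, lO k * Real.sqrt (∑ i, ((1 - t) * A i k + t * B i k) ^ 2))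
      ≤ (1 - t) * (∑ k, lO k * Real.sqrt (∑ i, A i k ^ 2))
        + t * ∑ k, lO k * Real.sqrt (∑ i, B i k ^ 2) := by
    rw [Finset.mul_sum, Finset.mul_sum, ← Finset.sum_add_distrib]
    refine Finset.sum_le_sum fun k _ => ?_
    calc lO k * Real.sqrt (∑ i, ((1 - t) * A i k + t * B i k) ^ 2)
        ≤ lO k * ((1 - t) * Real.sqrt (∑ i, A i k ^ 2)
            + t * Real.sqrt (∑ i, B i k ^ 2)) :=
          mul_le_mul_of_nonneg_left
            (sqrt_sum_sq_combo ht0 ht1 (fun i => A i k) (fun i => B i k)) (hlO k)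
      _ = (1 - t) * (lO k * Real.sqrt (∑ i, A i k ^ 2))
            + t * (lO k * Real.sqrt (∑ i, B i k ^ 2)) := by ring
  linarith

lemma gSur_combo (hlb : ∀ j, 0 ≤ lb j) (hLPhi : ∀ j k, 0 ≤ LPhi j k) (hlO : ∀ k, 0 ≤ lO k)
    {t : ℝ} (ht0 : 0 ≤ t) (ht1 : t ≤ 1) (A B Ω' : Matrix (Fin (p + 1)) (Fin p) ℝ) :
    gSur W y lb LPhi lO τ (fun i k => (1 - t) * A i k + t * B i k) Ω'
      ≤ (1 - t) * gSur W y lb LPhi lO τ A Ω' + t * gSur W y lb LPhi lO τ B Ω'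
        - (τ ^ 2 / 2) * (t * (1 - t)) * ∑ i, ∑ k, (A i k - B i k) ^ 2 := by
  unfold gSur
  have hlin : (∑ u : Fin (p + 1) × Fin p,
      Wᵀ.mulVec (fun i => y i - W.mulVec (vecM Ω') i) u
        * (vecM (fun i k => (1 - t) * A i k + t * B i k) u - vecM Ω' u))
      = (1 - t) * (∑ u : Fin (p + 1) × Fin p,
          Wᵀ.mulVec (fun i => y i - W.mulVec (vecM Ω') i) u * (vecM A u - vecM Ω' u))
        + t * ∑ u : Fin (p + 1) × Fin p,
          Wᵀ.mulVec (fun i => y i - W.mulVec (vecM Ω') i) u * (vecM B u - vecM Ω' u) := by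
    rw [Finset.mul_sum, Finset.mul_sum, ← Finset.sum_add_distrib]
    refine Finset.sum_congr rfl fun u _ => ?_
    simp only [vecM]
    ring
  have hquad : (∑ i, ∑ k, ((fun i k => (1 - t) * A i k + t * B i k) i k - Ω' i k) ^ 2)
      = (1 - t) * (∑ i, ∑ k, (A i k - Ω' i k) ^ 2)
        + t * (∑ i, ∑ k, (B i k - Ω' i k) ^ 2)
        - (t * (1 - t)) * ∑ i, ∑ k, (A i k - B i k) ^ 2 := by
    simp only [Finset.mul_sum]
    rw [← Finset.sum_add_distrib, ← Finset.sum_sub_distrib]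
    refine Finset.sum_congr rfl fun i _ => ?_
    rw [← Finset.sum_add_distrib, ← Finset.sum_sub_distrib]
    exact Finset.sum_congr rfl fun k _ => by ring
  have hpen := pen_combo lb LPhi lO hlb hLPhi hlO ht0 ht1 A B
  rw [hlin, hquad]
  have hP : Pen lb LPhi lO (fun i k => (1 - t) * A i k + t * B i k)
      ≤ (1 - t) * Pen lb LPhi lO A + t * Pen lb LPhi lO B := hpen
  nlinarith [hP]

lemma strong_min (hlb : ∀ j, 0 ≤ lb j) (hLPhi : ∀ j k, 0 ≤ LPhi j k) (hlO : ∀ k, 0 ≤ lO k)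
    (hτpos : 0 < τ) {Ω' Ωp : Matrix (Fin (p + 1)) (Fin p) ℝ} (hΩp : Ωp ∈ Sfeas p)
    (hmin : ∀ Ω ∈ Sfeas p, gSur W y lb LPhi lO τ Ωp Ω' ≤ gSur W y lb LPhi lO τ Ω Ω')
    {Ω : Matrix (Fin (p + 1)) (Fin p) ℝ} (hΩ : Ω ∈ Sfeas p) :
    gSur W y lb LPhi lO τ Ωp Ω' + (τ ^ 2 / 2) * (∑ i, ∑ k, (Ω i k - Ωp i k) ^ 2)
      ≤ gSur W y lb LPhi lO τ Ω Ω' := by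
  have hDnn : (0:ℝ) ≤ ∑ i, ∑ k, (Ω i k - Ωp i k) ^ 2 := Dnonneg _ _
  have hc : (0:ℝ) < τ ^ 2 / 2 := by positivity
  have key : ∀ t : ℝ, 0 < t → t ≤ 1 →
      gSur W y lb LPhi lO τ Ωp Ω'
        + (τ ^ 2 / 2) * ((1 - t) * ∑ i, ∑ k, (Ω i k - Ωp i k) ^ 2)
      ≤ gSur W y lb LPhi lO τ Ω Ω' := by
    intro t ht0 ht1
    have hmem : (fun i k => (1 - t) * Ωp i k + t * Ω i k) ∈ Sfeas p := by
      intro j k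
      simp only
      rw [hΩp j k, hΩ j k]
    have h1 := hmin _ hmem
    have h2 := gSur_combo W y lb LPhi lO τ hlb hLPhi hlO ht0.le ht1 Ωp Ω Ω'
    have hDs : (∑ i, ∑ k, (Ωp i k - Ω i k) ^ 2) = ∑ i, ∑ k, (Ω i k - Ωp i k) ^ 2 :=
      Dsym _ _
    rw [hDs] at h2
    have h3 : t * (gSur W y lb LPhi lO τ Ωp Ω'
          + (τ ^ 2 / 2) * ((1 - t) * ∑ i, ∑ k, (Ω i k - Ωp i k) ^ 2))
        ≤ t * gSur W y lb LPhi lO τ Ω Ω' := by nlinarith [h1, h2]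
    exact (mul_le_mul_iff_right₀ ht0).1 h3
  refine le_of_forall_pos_le_add fun ε hε => ?_
  set D := ∑ i, ∑ k, (Ω i k - Ωp i k) ^ 2 with hDdef
  have hcD1 : (0:ℝ) < (τ ^ 2 / 2) * D + 1 := by positivity
  set t := min 1 (ε / ((τ ^ 2 / 2) * D + 1)) with htdef
  have ht0 : 0 < t := lt_min one_pos (div_pos hε hcD1)
  have ht1 : t ≤ 1 := min_le_left _ _
  have hkey := key t ht0 ht1
  have htcD : t * ((τ ^ 2 / 2) * D) ≤ ε := by
    have hle : t ≤ ε / ((τ ^ 2 / 2) * D + 1) := min_le_right _ _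
    calc t * ((τ ^ 2 / 2) * D)
        ≤ (ε / ((τ ^ 2 / 2) * D + 1)) * ((τ ^ 2 / 2) * D) :=
          mul_le_mul_of_nonneg_right hle (by positivity)
      _ ≤ (ε / ((τ ^ 2 / 2) * D + 1)) * ((τ ^ 2 / 2) * D + 1) :=
          mul_le_mul_of_nonneg_left (by linarith) (by positivity)
      _ = ε := div_mul_cancel₀ ε (ne_of_gt hcD1)
  have hexp : (τ ^ 2 / 2) * ((1 - t) * D) = (τ ^ 2 / 2) * D - t * ((τ ^ 2 / 2) * D) := by
    ring
  linarith [hkey, htcD, hexp.le, hexp.ge]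

end SurAux

open SurAux
/-- **O(1/k) convergence rate of the exact surrogate (majorize–minimize) iteration**:
if `τ > ‖W‖₂` and at each step `Ω^{(i+1)}` minimizes `g(·, Ω^{(i)})` over `𝒮`, then
for every global minimizer `Ω°` of `f` over `𝒮` and every `k ≥ 1`,
`(1/k) Σ_{i=1}^k f(Ω^{(i)}) − f(Ω°) ≤ τ²‖Ω⁽⁰⁾ − Ω°‖_F²/(2k)` and consequently
`f(Ω^{(k)}) − f(Ω°) ≤ τ²‖Ω⁽⁰⁾ − Ω°‖_F²/(2k)`. -/
theorem surrogate_rate {n p : ℕ} (hn : 1 ≤ n) (hp : 1 ≤ p)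
    (W : Matrix (Fin n) (Fin (p + 1) × Fin p) ℝ) (y : Fin n → ℝ)
    (lb : Fin p → ℝ) (hlb : ∀ j, 0 ≤ lb j)
    (LPhi : Matrix (Fin p) (Fin p) ℝ) (hLPhi : ∀ j k, 0 ≤ LPhi j k)
    (lO : Fin p → ℝ) (hlO : ∀ k, 0 ≤ lO k)
    (τ : ℝ) (hτ : specNorm W < τ)
    (Ωs : ℕ → Matrix (Fin (p + 1)) (Fin p) ℝ) (h0 : Ωs 0 ∈ Sfeas p)
    (hstep : ∀ i : ℕ, Ωs (i + 1) ∈ Sfeas p ∧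
      ∀ Ω ∈ Sfeas p,
        gSur W y lb LPhi lO τ (Ωs (i + 1)) (Ωs i) ≤ gSur W y lb LPhi lO τ Ω (Ωs i))
    (Ωo : Matrix (Fin (p + 1)) (Fin p) ℝ) (hΩo : Ωo ∈ Sfeas p)
    (hΩomin : ∀ Ω ∈ Sfeas p, fObj W y lb LPhi lO Ωo ≤ fObj W y lb LPhi lO Ω)
    (k : ℕ) (hk : 1 ≤ k) :
    (∑ i ∈ Finset.range k, fObj W y lb LPhi lO (Ωs (i + 1))) / (k : ℝ)
        - fObj W y lb LPhi lO Ωo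
      ≤ τ ^ 2 * (∑ i, ∑ j, (Ωs 0 i j - Ωo i j) ^ 2) / (2 * (k : ℝ)) ∧
    fObj W y lb LPhi lO (Ωs k) - fObj W y lb LPhi lO Ωo
      ≤ τ ^ 2 * (∑ i, ∑ j, (Ωs 0 i j - Ωo i j) ^ 2) / (2 * (k : ℝ)) := by
  classical
  have hτpos : 0 < τ := lt_of_le_of_lt (SurAux.specNorm_nonneg W) hτ
  have hfeas : ∀ i, Ωs i ∈ Sfeas p := by
    intro i
    induction i with
    | zero => exact h0
    | succ i _ => exact (hstep i).1
  -- per-step inequality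
  have hstep1 : ∀ i : ℕ,
      fObj W y lb LPhi lO (Ωs (i + 1))
          + (τ ^ 2 / 2) * (∑ a, ∑ b, (Ωo a b - Ωs (i + 1) a b) ^ 2)
        ≤ fObj W y lb LPhi lO Ωo
          + (τ ^ 2 / 2) * (∑ a, ∑ b, (Ωo a b - Ωs i a b) ^ 2) := by
    intro i
    have h1 : fObj W y lb LPhi lO (Ωs (i + 1))
        ≤ gSur W y lb LPhi lO τ (Ωs (i + 1)) (Ωs i) :=
      SurAux.fObj_le_gSur W y lb LPhi lO τ hτ _ _
    have h2 := SurAux.strong_min W y lb LPhi lO τ hlb hLPhi hlO hτpos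
      (hstep i).1 (hstep i).2 hΩo
    have h3 : gSur W y lb LPhi lO τ Ωo (Ωs i)
        ≤ fObj W y lb LPhi lO Ωo
          + (τ ^ 2 / 2) * (∑ a, ∑ b, (Ωo a b - Ωs i a b) ^ 2) := by
      rw [SurAux.gSur_eq_fObj]
      have h4 : (0:ℝ) ≤ ∑ a, (W.mulVec (fun u => vecM Ωo u - vecM (Ωs i) u) a) ^ 2 :=
        Finset.sum_nonneg fun a _ => sq_nonneg _
      linarith
    linarith
  have hmono : ∀ i : ℕ, fObj W y lb LPhi lO (Ωs (i + 1)) ≤ fObj W y lb LPhi lO (Ωs i) := by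
    intro i
    have h1 : fObj W y lb LPhi lO (Ωs (i + 1))
        ≤ gSur W y lb LPhi lO τ (Ωs (i + 1)) (Ωs i) :=
      SurAux.fObj_le_gSur W y lb LPhi lO τ hτ _ _
    have h2 := (hstep i).2 (Ωs i) (hfeas i)
    have h3 := SurAux.gSur_self W y lb LPhi lO τ (Ωs i)
    linarith
  have hmono' : ∀ a b : ℕ, a ≤ b → fObj W y lb LPhi lO (Ωs b) ≤ fObj W y lb LPhi lO (Ωs a) := by
    intro a b hab
    induction hab with
    | refl => exact le_rfl
    | step _ ih => exact (hmono _).trans ih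
  have hkpos : (0:ℝ) < (k : ℝ) := by
    have : (0:ℕ) < k := hk
    exact_mod_cast this
  -- telescoping sum
  have hsum : (∑ i ∈ Finset.range k, (fObj W y lb LPhi lO (Ωs (i + 1)) - fObj W y lb LPhi lO Ωo))
      ≤ (τ ^ 2 / 2) * (∑ a, ∑ b, (Ωo a b - Ωs 0 a b) ^ 2) := by
    have h1 : (∑ i ∈ Finset.range k,
        (fObj W y lb LPhi lO (Ωs (i + 1)) - fObj W y lb LPhi lO Ωo))
        ≤ ∑ i ∈ Finset.range k,
            ((τ ^ 2 / 2) * (∑ a, ∑ b, (Ωo a b - Ωs i a b) ^ 2)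
              - (τ ^ 2 / 2) * (∑ a, ∑ b, (Ωo a b - Ωs (i + 1) a b) ^ 2)) :=
      Finset.sum_le_sum fun i _ => by linarith [hstep1 i]
    have h2 := Finset.sum_range_sub'
      (fun i => (τ ^ 2 / 2) * (∑ a, ∑ b, (Ωo a b - Ωs i a b) ^ 2)) k
    have h3 : (0:ℝ) ≤ (τ ^ 2 / 2) * (∑ a, ∑ b, (Ωo a b - Ωs k a b) ^ 2) := by
      have := SurAux.Dnonneg Ωo (Ωs k)
      positivity
    rw [h2] at h1
    linarith
  have hD0 : (∑ a, ∑ b, (Ωo a b - Ωs 0 a b) ^ 2) = ∑ a, ∑ b, (Ωs 0 a b - Ωo a b) ^ 2 :=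
    SurAux.Dsym _ _
  rw [hD0] at hsum
  have hconst : (∑ i ∈ Finset.range k,
      (fObj W y lb LPhi lO (Ωs (i + 1)) - fObj W y lb LPhi lO Ωo))
      = (∑ i ∈ Finset.range k, fObj W y lb LPhi lO (Ωs (i + 1)))
        - (k : ℝ) * fObj W y lb LPhi lO Ωo := by
    rw [Finset.sum_sub_distrib, Finset.sum_const, Finset.card_range, nsmul_eq_mul]
  rw [hconst] at hsum
  have first : (∑ i ∈ Finset.range k, fObj W y lb LPhi lO (Ωs (i + 1))) / (k : ℝ)
      - fObj W y lb LPhi lO Ωo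
      ≤ τ ^ 2 * (∑ i, ∑ j, (Ωs 0 i j - Ωo i j) ^ 2) / (2 * (k : ℝ)) := by
    rw [div_sub' (ne_of_gt hkpos), div_le_div_iff₀ hkpos (by positivity)]
    ring_nf at hsum ⊢
    nlinarith [hsum, hkpos]
  refine ⟨first, ?_⟩
  have hle : ∀ i ∈ Finset.range k,
      fObj W y lb LPhi lO (Ωs k) ≤ fObj W y lb LPhi lO (Ωs (i + 1)) := fun i hi =>
    hmono' (i + 1) k (Finset.mem_range.mp hi)
  have hcard : (k : ℝ) * fObj W y lb LPhi lO (Ωs k)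
      ≤ ∑ i ∈ Finset.range k, fObj W y lb LPhi lO (Ωs (i + 1)) := by
    calc (k : ℝ) * fObj W y lb LPhi lO (Ωs k)
        = ∑ _i ∈ Finset.range k, fObj W y lb LPhi lO (Ωs k) := by
          rw [Finset.sum_const, Finset.card_range, nsmul_eq_mul]
      _ ≤ _ := Finset.sum_le_sum hle
  have h5 : fObj W y lb LPhi lO (Ωs k)
      ≤ (∑ i ∈ Finset.range k, fObj W y lb LPhi lO (Ωs (i + 1))) / (k : ℝ) :=
    (le_div_iff₀ hkpos).2 (by linarith [hcard])
  linarith [first, h5]
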